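/- Let G be a finite-dimensional Lie group with a left Haar measure dg, acting smoothly and properly on a finite-dimensional smooth manifold M without boundary (the action map G × M → M is smooth, and (g,m) ↦ (g•m, m) is a proper map). Let s : M → ℂ be a smooth, compactly supported function. Then Φ(s)(m) := ∫_G s(g⁻¹•m) dg is well defined (for each m the integrand is compactly supported in g), the function Φ(s) is smooth on M, and Φ(s) is G-invariant: Φ(s)(h•m) = Φ(s)(m) for all h ∈ G and m ∈ M. -/

import Mathlib

open MeasureTheory Manifold Set Metric Function Filter Topology
open scoped NNReal ENNReal

theorem aux_meas {G : Type*} [TopologicalSpace G] [MeasurableSpace G] [BorelSpace G]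
    (μ : Measure G) {E' : Type*} [NormedAddCommGroup E'] {k : Set G} (hk : IsCompact k)
    {f : G → E'} (hf : Continuous f) (h0 : ∀ g ∉ k, f g = 0) :
    AEStronglyMeasurable f μ := by
  borelize E'
  refine (stronglyMeasurable_iff_measurable_separable.2 ⟨hf.measurable, ?_⟩).aestronglyMeasurable
  have hsub : range f ⊆ {0} ∪ (f '' k) := by
    rintro - ⟨g, rfl⟩
    by_cases hg : g ∈ k
    · exact Or.inr (Set.mem_image_of_mem f hg)
    · exact Or.inl (h0 g hg)
  exact (((Set.finite_singleton (0 : E')).isSeparable).union (hk.image hf).isSeparable).mono hsub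

theorem aux_int {G : Type*} [TopologicalSpace G] [MeasurableSpace G] [BorelSpace G]
    (μ : Measure G) {E' : Type*} [NormedAddCommGroup E'] {k V : Set G} (hk : IsCompact k)
    (hV : IsOpen V) (hkV : k ⊆ V) (hμV : μ V < ⊤)
    {f : G → E'} (hf : Continuous f) (h0 : ∀ g ∉ k, f g = 0) :
    Integrable f μ := by
  obtain ⟨C, hC⟩ := hk.exists_bound_of_continuousOn hf.continuousOn
  refine Integrable.mono' (g := V.indicator fun _ => max C 0) ?_ (aux_meas μ hk hf h0)
    (ae_of_all _ fun g => ?_)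
  · rw [integrable_indicator_iff hV.measurableSet]
    exact integrableOn_const hμV.ne
  · by_cases hg : g ∈ k
    · rw [Set.indicator_of_mem (hkV hg)]
      exact (hC g hg).trans (le_max_left _ _)
    · rw [h0 g hg, norm_zero]
      exact Set.indicator_nonneg (fun _ _ => le_max_right _ _) g

theorem aux_locbound {P : Type*} [NormedAddCommGroup P] [NormedSpace ℝ P]
    {G : Type*} [TopologicalSpace G] {E' : Type*} [NormedAddCommGroup E']
    {U : Set P} (hU : IsOpen U) {k : Set G} (hk : IsCompact k)
    {ψ : P → G → E'} (hψ : ContinuousOn (uncurry ψ) (U ×ˢ univ))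
    {p₀ : P} (hp₀ : p₀ ∈ U) :
    ∃ ε C, 0 < ε ∧ ball p₀ ε ⊆ U ∧ ∀ p ∈ ball p₀ ε, ∀ g ∈ k, ‖ψ p g‖ ≤ C := by
  have hopen : IsOpen (U ×ˢ (univ : Set G)) := hU.prod isOpen_univ
  have hCA : ∀ g : G, ∃ u ∈ 𝓝 p₀, ∃ v ∈ 𝓝 g,
      ∀ p ∈ u, ∀ y ∈ v, ‖ψ p y‖ ≤ (‖ψ p₀ g‖₊ + 1 : ℝ≥0) := by
    intro g
    have h1 : ContinuousAt (uncurry ψ) (p₀, g) :=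
      hψ.continuousAt (hopen.mem_nhds ⟨hp₀, trivial⟩)
    have h2 : ∀ᶠ q in 𝓝 (p₀, g), ‖uncurry ψ q‖ ≤ (‖ψ p₀ g‖₊ + 1 : ℝ≥0) := by
      have := h1.norm.eventually_le_const (show ‖uncurry ψ (p₀, g)‖ < (‖ψ p₀ g‖₊ + 1 : ℝ≥0) by
        push_cast [coe_nnnorm]; exact lt_add_one _)
      exact this
    rcases mem_nhds_prod_iff.1 h2 with ⟨u, hu, v, hv, huv⟩
    exact ⟨u, hu, v, hv, fun p hp y hy => huv (Set.mk_mem_prod hp hy)⟩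
  choose u hu v hv hb using hCA
  obtain ⟨t, ht⟩ := hk.elim_nhds_subcover v fun g _ => hv g
  have hN : (⋂ g ∈ t, u g) ∩ U ∈ 𝓝 p₀ :=
    inter_mem ((biInter_finset_mem t).2 fun g _ => hu g) (hU.mem_nhds hp₀)
  obtain ⟨ε, εpos, hε⟩ := Metric.mem_nhds_iff.1 hN
  refine ⟨ε, (t.sup fun g => ‖ψ p₀ g‖₊ + 1 : ℝ≥0), εpos,
    hε.trans inter_subset_right, fun p hp g hg => ?_⟩
  obtain ⟨i, hit, hgv⟩ : ∃ i ∈ t, g ∈ v i := by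
    have := ht.2 hg
    simpa using this
  have hpu : p ∈ u i := by
    have := (hε hp).1
    exact (Set.mem_iInter₂.1 this) i hit
  refine (hb i p hpu g hgv).trans ?_
  exact_mod_cast Finset.le_sup (f := fun g => ‖ψ p₀ g‖₊ + 1) hit

theorem aux_fderiv {P : Type*} [NormedAddCommGroup P] [NormedSpace ℝ P]
    {EG : Type*} [NormedAddCommGroup EG] [NormedSpace ℝ EG]
    {G : Type*} [TopologicalSpace G] [ChartedSpace EG G]
    [IsManifold 𝓘(ℝ, EG) (⊤ : ℕ∞) G]
    {E' : Type*} [NormedAddCommGroup E'] [NormedSpace ℝ E']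
    {U : Set P} (hU : IsOpen U) {n : ℕ} {F : P → G → E'}
    (hF : ContMDiffOn ((𝓘(ℝ, P)).prod (𝓘(ℝ, EG))) (𝓘(ℝ, E')) (n + 1 : ℕ)
      (uncurry F) (U ×ˢ univ)) :
    ContMDiffOn ((𝓘(ℝ, P)).prod (𝓘(ℝ, EG))) (𝓘(ℝ, P →L[ℝ] E')) n
      (fun q : P × G => fderiv ℝ (fun p => F p q.2) q.1) (U ×ˢ univ) := by
  rintro ⟨p₀, g₀⟩ ⟨hp₀, -⟩
  set c := chartAt EG g₀ with hc
  have hg₀ : g₀ ∈ c.source := mem_chart_source EG g₀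
  set Fc : P × EG → E' := fun q => F q.1 (c.symm q.2) with hFcdef
  have hmap1 : MapsTo (fun q : P × EG => (q.1, c.symm q.2)) (U ×ˢ c.target)
      (U ×ˢ (univ : Set G)) := fun q hq => ⟨hq.1, trivial⟩
  have h1 : ContMDiffOn ((𝓘(ℝ, P)).prod (𝓘(ℝ, EG))) ((𝓘(ℝ, P)).prod (𝓘(ℝ, EG))) (n + 1 : ℕ)
      (fun q : P × EG => (q.1, c.symm q.2)) (U ×ˢ c.target) := by
    refine ContMDiffOn.prodMk contMDiff_fst.contMDiffOn ?_
    exact (contMDiffOn_chart_symm (x := g₀)).comp contMDiff_snd.contMDiffOn fun q hq => hq.2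
  have hFcM : ContMDiffOn ((𝓘(ℝ, P)).prod (𝓘(ℝ, EG))) (𝓘(ℝ, E')) (n + 1 : ℕ)
      Fc (U ×ˢ c.target) := hF.comp h1 hmap1
  have hFc : ContDiffOn ℝ ((n : WithTop ℕ∞) + 1) Fc (U ×ˢ c.target) := by
    rw [← modelWithCornersSelf_prod, chartedSpaceSelf_prod] at hFcM
    exact_mod_cast hFcM.contDiffOn
  have hUW : IsOpen (U ×ˢ c.target) := hU.prod c.open_target
  have hfd : ContDiffOn ℝ (n : WithTop ℕ∞) (fderiv ℝ Fc) (U ×ˢ c.target) :=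
    ((contDiffOn_succ_iff_fderiv_of_isOpen hUW).1 hFc).2.2
  set Gc : P × EG → (P →L[ℝ] E') :=
    fun q => (fderiv ℝ Fc q).comp (ContinuousLinearMap.inl ℝ P EG) with hGcdef
  have hGc : ContDiffOn ℝ (n : WithTop ℕ∞) Gc (U ×ˢ c.target) := by
    have hL : ContDiff ℝ (n : WithTop ℕ∞)
        (fun L : (P × EG) →L[ℝ] E' => L.comp (ContinuousLinearMap.inl ℝ P EG)) :=
      ((ContinuousLinearMap.compL ℝ P (P × EG) E').flip
        (ContinuousLinearMap.inl ℝ P EG)).contDiff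
    exact hL.comp_contDiffOn hfd
  have heq : ∀ p ∈ U, ∀ g ∈ c.source, fderiv ℝ (fun q => F q g) p = Gc (p, c g) := by
    intro p hp g hg
    have hcg : c g ∈ c.target := c.map_source hg
    have hF_eq : (fun q : P => F q g) = fun q : P => Fc (q, c g) := by
      funext q
      simp only [hFcdef]
      rw [c.left_inv hg]
    have hdiff : DifferentiableAt ℝ Fc (p, c g) := by
      have h1le : (1 : WithTop ℕ∞) ≤ (n : WithTop ℕ∞) + 1 := le_add_self
      exact (hFc.differentiableOn (by simp)).differentiableAt (hUW.mem_nhds ⟨hp, hcg⟩)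
    have hι : HasFDerivAt (fun q : P => (q, c g)) (ContinuousLinearMap.inl ℝ P EG) p :=
      (hasFDerivAt_id p).prodMk (hasFDerivAt_const (c g) p)
    rw [hF_eq]
    exact (hdiff.hasFDerivAt.comp p hι).fderiv
  have hmap2 : MapsTo (fun q : P × G => (q.1, c q.2)) (U ×ˢ c.source) (U ×ˢ c.target) :=
    fun q hq => ⟨hq.1, c.map_source hq.2⟩
  have h3 : ContMDiffOn ((𝓘(ℝ, P)).prod (𝓘(ℝ, EG))) ((𝓘(ℝ, P)).prod (𝓘(ℝ, EG))) n
      (fun q : P × G => (q.1, c q.2)) (U ×ˢ c.source) := by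
    refine ContMDiffOn.prodMk contMDiff_fst.contMDiffOn ?_
    exact (contMDiffOn_chart (x := g₀)).comp contMDiff_snd.contMDiffOn fun q hq => hq.2
  have hGcM : ContMDiffOn ((𝓘(ℝ, P)).prod (𝓘(ℝ, EG))) (𝓘(ℝ, P →L[ℝ] E')) n
      Gc (U ×ˢ c.target) := by
    rw [← modelWithCornersSelf_prod, chartedSpaceSelf_prod]
    exact ContDiffOn.contMDiffOn (by exact_mod_cast hGc)
  have h4 : ContMDiffOn ((𝓘(ℝ, P)).prod (𝓘(ℝ, EG))) (𝓘(ℝ, P →L[ℝ] E')) n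
      (fun q : P × G => Gc (q.1, c q.2)) (U ×ˢ c.source) := hGcM.comp h3 hmap2
  have hns : (U ×ˢ c.source) ∈ 𝓝 (p₀, g₀) := (hU.prod c.open_source).mem_nhds ⟨hp₀, hg₀⟩
  apply ContMDiffAt.contMDiffWithinAt
  apply (h4.contMDiffAt hns).congr_of_eventuallyEq
  filter_upwards [hns] with q hq using heq q.1 hq.1 q.2 hq.2

universe uE uP

theorem aux_key {P : Type uP} [NormedAddCommGroup P] [NormedSpace ℝ P]
    {EG : Type*} [NormedAddCommGroup EG] [NormedSpace ℝ EG]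
    {G : Type*} [TopologicalSpace G] [ChartedSpace EG G]
    [IsManifold 𝓘(ℝ, EG) (⊤ : ℕ∞) G] [LocallyCompactSpace G]
    [MeasurableSpace G] [BorelSpace G] (μ : Measure G) [IsFiniteMeasureOnCompacts μ]
    {U : Set P} (hU : IsOpen U) {k : Set G} (hk : IsCompact k) :
    ∀ (n : ℕ) {E' : Type (max uP uE)} [NormedAddCommGroup E'] [NormedSpace ℝ E']
      [CompleteSpace E'] (F : P → G → E'),
      (∀ p ∈ U, ∀ g ∉ k, F p g = 0) →
      ContMDiffOn ((𝓘(ℝ, P)).prod (𝓘(ℝ, EG))) (𝓘(ℝ, E')) n (uncurry F) (U ×ˢ univ) →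
      ContDiffOn ℝ n (fun p => ∫ g, F p g ∂μ) U := by
  obtain ⟨V, hVopen, hkV, hμV⟩ : ∃ V, IsOpen V ∧ k ⊆ V ∧ μ V < ⊤ := by
    obtain ⟨K, hKc, hKk⟩ := exists_compact_superset hk
    exact ⟨interior K, isOpen_interior, hKk,
      lt_of_le_of_lt (measure_mono interior_subset) hKc.measure_lt_top⟩
  have hbint : Integrable (V.indicator fun _ => (1 : ℝ)) μ := by
    rw [integrable_indicator_iff hVopen.measurableSet]
    exact integrableOn_const hμV.ne
  intro n
  induction n with
  | zero =>
    intro E' _ _ _ F hsupp hsm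
    have hcont := hsm.continuousOn
    have hFc : ∀ p ∈ U, Continuous (F p) := fun p hp =>
      hcont.comp_continuous (continuous_const.prodMk continuous_id) fun g => ⟨hp, trivial⟩
    have h0 : ContinuousOn (fun p => ∫ g, F p g ∂μ) U := by
      intro p₀ hp₀
      obtain ⟨ε, C, εpos, hballU, hC⟩ := aux_locbound hU hk hcont hp₀
      apply ContinuousAt.continuousWithinAt
      apply continuousAt_of_dominated (bound := V.indicator fun _ => max C 0)
      · filter_upwards [hU.mem_nhds hp₀] with p hp using aux_meas μ hk (hFc p hp) (hsupp p hp)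
      · filter_upwards [ball_mem_nhds p₀ εpos] with p hp
        refine ae_of_all _ fun g => ?_
        by_cases hg : g ∈ k
        · rw [Set.indicator_of_mem (hkV hg)]
          exact (hC p hp g hg).trans (le_max_left _ _)
        · rw [hsupp p (hballU hp) g hg, norm_zero]
          exact Set.indicator_nonneg (fun _ _ => le_max_right _ _) g
      · rw [integrable_indicator_iff hVopen.measurableSet]
        exact integrableOn_const hμV.ne
      · refine ae_of_all _ fun g => ?_
        have h1 : ContinuousAt (uncurry F) (p₀, g) :=
          hcont.continuousAt ((hU.prod isOpen_univ).mem_nhds ⟨hp₀, trivial⟩)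
        have h2 : ContinuousAt (fun p : P => (p, g)) p₀ :=
          (continuous_id.prodMk continuous_const).continuousAt
        show ContinuousAt ((uncurry F) ∘ fun p : P => (p, g)) p₀
        exact ContinuousAt.comp (f := fun p : P => (p, g)) h1 h2
    rw [Nat.cast_zero, contDiffOn_zero]
    exact h0
  | succ n ih =>
    intro E' iE1 iE2 iE3 F hsupp hsm
    set F' : P → G → (P →L[ℝ] E') := fun p g => fderiv ℝ (fun q => F q g) p with hF'def
    have hsm' : ContMDiffOn ((𝓘(ℝ, P)).prod (𝓘(ℝ, EG))) (𝓘(ℝ, P →L[ℝ] E')) n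
        (uncurry F') (U ×ˢ univ) := aux_fderiv hU hsm
    have hsupp' : ∀ p ∈ U, ∀ g ∉ k, F' p g = 0 := by
      intro p hp g hg
      have hev : (fun q => F q g) =ᶠ[𝓝 p] fun _ => (0 : E') := by
        filter_upwards [hU.mem_nhds hp] with q hq using hsupp q hq g hg
      show fderiv ℝ (fun q => F q g) p = 0
      rw [hev.fderiv_eq, fderiv_const_apply]
    have hdiffat : ∀ p ∈ U, ∀ g : G, HasFDerivAt (fun q => F q g) (F' p g) p := by
      intro p hp g
      have h1 : ContMDiffAt ((𝓘(ℝ, P)).prod (𝓘(ℝ, EG))) (𝓘(ℝ, E')) (n + 1 : ℕ)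
          (uncurry F) (p, g) :=
        hsm.contMDiffAt ((hU.prod isOpen_univ).mem_nhds ⟨hp, trivial⟩)
      have h2 : ContMDiffAt (𝓘(ℝ, P)) (𝓘(ℝ, E')) (n + 1 : ℕ) (fun q => F q g) p :=
        h1.comp p (contMDiffAt_id.prodMk contMDiffAt_const)
      have h3 : ContDiffAt ℝ (n + 1 : ℕ) (fun q => F q g) p := h2.contDiffAt
      have h4 : DifferentiableAt ℝ (fun q => F q g) p :=
        h3.differentiableAt (by simp)
      exact h4.hasFDerivAt
    have hFc : ∀ p ∈ U, Continuous (F p) := fun p hp =>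
      hsm.continuousOn.comp_continuous (continuous_const.prodMk continuous_id)
        fun g => ⟨hp, trivial⟩
    have hkey : ∀ p₀ ∈ U, HasFDerivAt (fun p => ∫ g, F p g ∂μ) (∫ g, F' p₀ g ∂μ) p₀ := by
      intro p₀ hp₀
      obtain ⟨ε, C, εpos, hballU, hC⟩ := aux_locbound hU hk hsm'.continuousOn hp₀
      have hF'c : Continuous (F' p₀) :=
        hsm'.continuousOn.comp_continuous (continuous_const.prodMk continuous_id)
          fun g => ⟨hp₀, trivial⟩
      apply hasFDerivAt_integral_of_dominated_of_fderiv_le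
        (bound := V.indicator fun _ => max C 0) (ball_mem_nhds p₀ εpos)
      · filter_upwards [hU.mem_nhds hp₀] with p hp using aux_meas μ hk (hFc p hp) (hsupp p hp)
      · exact aux_int μ hk hVopen hkV hμV (hFc p₀ hp₀) (hsupp p₀ hp₀)
      · exact aux_meas μ hk hF'c (hsupp' p₀ hp₀)
      · refine ae_of_all _ fun g p hp => ?_
        by_cases hg : g ∈ k
        · rw [Set.indicator_of_mem (hkV hg)]
          exact (hC p hp g hg).trans (le_max_left _ _)
        · rw [hsupp' p (hballU hp) g hg, norm_zero]
          exact Set.indicator_nonneg (fun _ _ => le_max_right _ _) g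
      · rw [integrable_indicator_iff hVopen.measurableSet]
        exact integrableOn_const hμV.ne
      · exact ae_of_all _ fun g p hp => hdiffat p (hballU hp) g
    have hconc := ih F' hsupp' hsm'
    have hfinal : ContDiffOn ℝ ((n : WithTop ℕ∞) + 1) (fun p => ∫ g, F p g ∂μ) U := by
      rw [contDiffOn_succ_iff_fderiv_of_isOpen hU]
      refine ⟨fun p hp => (hkey p hp).differentiableAt.differentiableWithinAt, by simp, ?_⟩
      exact ContDiffOn.congr hconc fun p hp => (hkey p hp).fderiv
    exact_mod_cast hfinal


universe u1 u2 u3 u4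

theorem average_smooth_aux
    {EG : Type u1} [NormedAddCommGroup EG] [NormedSpace ℝ EG] [FiniteDimensional ℝ EG]
    {G : Type u2} [TopologicalSpace G] [ChartedSpace EG G] [Group G]
    [LieGroup (𝓘(ℝ, EG)) (⊤ : ℕ∞) G]
    [MeasurableSpace G] [BorelSpace G]
    (μG : Measure G) [μG.IsHaarMeasure]
    {EM : Type u3} [NormedAddCommGroup EM] [NormedSpace ℝ EM] [FiniteDimensional ℝ EM]
    {M : Type u4} [TopologicalSpace M] [ChartedSpace EM M]
    [IsManifold (𝓘(ℝ, EM)) (⊤ : ℕ∞) M]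
    [MulAction G M]
    (hsmooth : ContMDiff ((𝓘(ℝ, EG)).prod (𝓘(ℝ, EM))) (𝓘(ℝ, EM)) (⊤ : ℕ∞)
      (fun p : G × M => p.1 • p.2))
    (hproper : IsProperMap (fun p : G × M => (p.1 • p.2, p.2)))
    (s : M → ℂ) (hs_smooth : ContMDiff (𝓘(ℝ, EM)) (𝓘(ℝ, ℂ)) (⊤ : ℕ∞) s)
    (hs_supp : HasCompactSupport s) :
    ContMDiff (𝓘(ℝ, EM)) (𝓘(ℝ, ℂ)) (⊤ : ℕ∞) (fun m : M => ∫ g, s (g⁻¹ • m) ∂μG) := by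
  haveI : LocallyCompactSpace G := ChartedSpace.locallyCompactSpace EG G
  haveI : LocallyCompactSpace M := ChartedSpace.locallyCompactSpace EM M
  have hkL : ∀ L : Set M, IsCompact L →
      IsCompact (Prod.fst '' ((fun p : G × M => (p.1 • p.2, p.2)) ⁻¹' (L ×ˢ tsupport s))) ∧
      (∀ m ∈ L, ∀ g ∉ Prod.fst '' ((fun p : G × M => (p.1 • p.2, p.2)) ⁻¹' (L ×ˢ tsupport s)),
        s (g⁻¹ • m) = 0) := by
    intro L hL
    constructor
    · exact (hproper.isCompact_preimage (hL.prod hs_supp)).image continuous_fst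
    · intro m hm g hg
      by_contra hne
      apply hg
      refine ⟨(g, g⁻¹ • m), ?_, rfl⟩
      refine Set.mem_preimage.2 (Set.mk_mem_prod ?_ ?_)
      · rw [smul_inv_smul]; exact hm
      · exact subset_tsupport s (Function.mem_support.2 hne)
  intro m₀
  apply contMDiffAt_infty.2
  intro n
  set c := chartAt EM m₀ with hcdef
  have hm₀ : m₀ ∈ c.source := mem_chart_source EM m₀
  obtain ⟨L, hLn, hLsub, hLc⟩ := local_compact_nhds (c.open_source.mem_nhds hm₀)
  obtain ⟨hkc, hk0⟩ := hkL L hLc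
  set k := Prod.fst '' ((fun p : G × M => (p.1 • p.2, p.2)) ⁻¹' (L ×ˢ tsupport s)) with hkdef
  set U : Set EM := c.target ∩ c.symm ⁻¹' interior L with hUdef
  have hUopen : IsOpen U := c.isOpen_inter_preimage_symm isOpen_interior
  set F : EM → G → ULift.{u3} ℂ := fun x g => ULift.up (s (g⁻¹ • c.symm x)) with hFdef
  have hsuppF : ∀ x ∈ U, ∀ g ∉ k, F x g = 0 := by
    intro x hx g hg
    have h0 : s (g⁻¹ • c.symm x) = 0 := hk0 _ (interior_subset hx.2) g hg
    show ULift.up (s (g⁻¹ • c.symm x)) = 0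
    rw [h0]; rfl
  have hsmF : ContMDiffOn ((𝓘(ℝ, EM)).prod (𝓘(ℝ, EG))) (𝓘(ℝ, ULift.{u3} ℂ)) n
      (uncurry F) (U ×ˢ univ) := by
    have hinner : ContMDiffOn ((𝓘(ℝ, EM)).prod (𝓘(ℝ, EG))) ((𝓘(ℝ, EG)).prod (𝓘(ℝ, EM))) n
        (fun q : EM × G => (q.2⁻¹, c.symm q.1)) (U ×ˢ univ) := by
      refine ContMDiffOn.prodMk ?_ ?_
      · exact (((contMDiff_inv 𝓘(ℝ, EG) ((⊤ : ℕ∞) : WithTop ℕ∞)).of_le (WithTop.coe_le_coe.2 le_top)).comp contMDiff_snd).contMDiffOn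
      · exact (contMDiffOn_chart_symm (x := m₀)).comp contMDiff_fst.contMDiffOn
          fun q hq => hq.1.1
    have haction : ContMDiff ((𝓘(ℝ, EG)).prod (𝓘(ℝ, EM))) (𝓘(ℝ, EM)) n
        (fun p : G × M => p.1 • p.2) := hsmooth.of_le (WithTop.coe_le_coe.2 le_top)
    have hs' : ContMDiff (𝓘(ℝ, EM)) (𝓘(ℝ, ℂ)) n s := hs_smooth.of_le (WithTop.coe_le_coe.2 le_top)
    have hcomp := (hs'.comp haction).comp_contMDiffOn hinner
    have hD : ContDiff ℝ (n : WithTop ℕ∞)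
        ((ContinuousLinearEquiv.ulift (R₁ := ℝ) (M₁ := ℂ)).symm : ℂ → ULift.{u3} ℂ) :=
      (ContinuousLinearEquiv.ulift (R₁ := ℝ) (M₁ := ℂ)).symm.contDiff
    exact hD.contMDiff.comp_contMDiffOn hcomp
  have hint := aux_key μG hUopen hkc n F hsuppF hsmF
  set D : ULift.{u3} ℂ ≃L[ℝ] ℂ := ContinuousLinearEquiv.ulift with hDdef
  have hm₀U : c m₀ ∈ U := by
    refine ⟨c.map_source hm₀, ?_⟩
    show c.symm (c m₀) ∈ interior L
    rw [c.left_inv hm₀]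
    exact mem_interior_iff_mem_nhds.2 hLn
  have hO : c.source ∩ c ⁻¹' U ∈ 𝓝 m₀ :=
    (c.isOpen_inter_preimage hUopen).mem_nhds ⟨hm₀, hm₀U⟩
  have heq : ∀ m ∈ c.source ∩ c ⁻¹' U,
      (∫ g, s (g⁻¹ • m) ∂μG) = D (∫ g, F (c m) g ∂μG) := by
    intro m hm
    rw [← D.integral_comp_comm]
    congr 1
    funext g
    show s (g⁻¹ • m) = D (ULift.up (s (g⁻¹ • c.symm (c m))))
    rw [c.left_inv hm.1]
    rfl
  have hs1 : ContMDiffAt (𝓘(ℝ, EM)) (𝓘(ℝ, EM)) n c m₀ :=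
    (contMDiffOn_chart (x := m₀)).contMDiffAt (c.open_source.mem_nhds hm₀)
  have hs2 : ContMDiffAt (𝓘(ℝ, EM)) (𝓘(ℝ, ULift.{u3} ℂ)) n
      (fun x => ∫ g, F x g ∂μG) (c m₀) := by
    have h5 : ContMDiffOn (𝓘(ℝ, EM)) (𝓘(ℝ, ULift.{u3} ℂ)) n
        (fun x => ∫ g, F x g ∂μG) U := ContDiffOn.contMDiffOn (by exact_mod_cast hint)
    exact h5.contMDiffAt (hUopen.mem_nhds hm₀U)
  have hs3 : ContDiff ℝ (n : WithTop ℕ∞) (D : ULift.{u3} ℂ → ℂ) := D.contDiff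
  have hcompose : ContMDiffAt (𝓘(ℝ, EM)) (𝓘(ℝ, ℂ)) n
      ((fun z => D z) ∘ ((fun x => ∫ g, F x g ∂μG) ∘ c)) m₀ :=
    hs3.comp_contMDiffAt (hs2.comp m₀ hs1)
  refine hcompose.congr_of_eventuallyEq ?_
  filter_upwards [hO] with m hm using heq m hm

theorem average_smooth_invariant
    {EG : Type*} [NormedAddCommGroup EG] [NormedSpace ℝ EG] [FiniteDimensional ℝ EG]
    {G : Type*} [TopologicalSpace G] [ChartedSpace EG G] [Group G]
    [LieGroup (𝓘(ℝ, EG)) (⊤ : ℕ∞) G]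
    [MeasurableSpace G] [BorelSpace G]
    (μG : Measure G) [μG.IsHaarMeasure]
    {EM : Type*} [NormedAddCommGroup EM] [NormedSpace ℝ EM] [FiniteDimensional ℝ EM]
    {M : Type*} [TopologicalSpace M] [ChartedSpace EM M]
    [IsManifold (𝓘(ℝ, EM)) (⊤ : ℕ∞) M]
    [MulAction G M]
    (hsmooth : ContMDiff ((𝓘(ℝ, EG)).prod (𝓘(ℝ, EM))) (𝓘(ℝ, EM)) (⊤ : ℕ∞)
      (fun p : G × M => p.1 • p.2))
    (hproper : IsProperMap (fun p : G × M => (p.1 • p.2, p.2)))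
    (s : M → ℂ) (hs_smooth : ContMDiff (𝓘(ℝ, EM)) (𝓘(ℝ, ℂ)) (⊤ : ℕ∞) s)
    (hs_supp : HasCompactSupport s) :
    (∀ m : M, HasCompactSupport (fun g : G => s (g⁻¹ • m))) ∧
    ContMDiff (𝓘(ℝ, EM)) (𝓘(ℝ, ℂ)) (⊤ : ℕ∞) (fun m : M => ∫ g, s (g⁻¹ • m) ∂μG) ∧
    (∀ (h : G) (m : M), (∫ g, s (g⁻¹ • h • m) ∂μG) = ∫ g, s (g⁻¹ • m) ∂μG) := by
  haveI : LocallyCompactSpace G := ChartedSpace.locallyCompactSpace EG G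
  haveI : LocallyCompactSpace M := ChartedSpace.locallyCompactSpace EM M
  haveI : IsTopologicalGroup G := topologicalGroup_of_lieGroup (I := 𝓘(ℝ, EG)) (n := ((⊤ : ℕ∞) : WithTop ℕ∞))
  have hcontA : Continuous fun p : G × M => p.1 • p.2 := hsmooth.continuous
  -- the compact "uniform support" sets
  have hkL : ∀ L : Set M, IsCompact L →
      IsCompact (Prod.fst '' ((fun p : G × M => (p.1 • p.2, p.2)) ⁻¹' (L ×ˢ tsupport s))) ∧
      (∀ m ∈ L, ∀ g ∉ Prod.fst '' ((fun p : G × M => (p.1 • p.2, p.2)) ⁻¹' (L ×ˢ tsupport s)),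
        s (g⁻¹ • m) = 0) := by
    intro L hL
    constructor
    · exact (hproper.isCompact_preimage (hL.prod hs_supp)).image continuous_fst
    · intro m hm g hg
      by_contra hne
      apply hg
      refine ⟨(g, g⁻¹ • m), ?_, rfl⟩
      refine Set.mem_preimage.2 (Set.mk_mem_prod ?_ ?_)
      · rw [smul_inv_smul]; exact hm
      · exact subset_tsupport s (Function.mem_support.2 hne)
  -- Part 1
  have part1 : ∀ m : M, HasCompactSupport fun g : G => s (g⁻¹ • m) := by
    intro m
    obtain ⟨hkc, hk0⟩ := hkL {m} isCompact_singleton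
    set k := Prod.fst '' ((fun p : G × M => (p.1 • p.2, p.2)) ⁻¹' (({m} : Set M) ×ˢ tsupport s))
    have hScl : IsClosed {g : G | g⁻¹ • m ∈ tsupport s} := by
      have hcm : Continuous fun g : G => g⁻¹ • m :=
        hcontA.comp (continuous_inv.prodMk continuous_const)
      exact (isClosed_tsupport s).preimage hcm
    have hsub : tsupport (fun g : G => s (g⁻¹ • m)) ⊆ k := by
      have h1 : Function.support (fun g : G => s (g⁻¹ • m)) ⊆
          {g : G | g⁻¹ • m ∈ tsupport s} :=
        fun g hg => subset_tsupport s (Function.mem_support.2 hg)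
      have h2 : {g : G | g⁻¹ • m ∈ tsupport s} ⊆ k := by
        intro g hg
        refine ⟨(g, g⁻¹ • m), ?_, rfl⟩
        refine Set.mem_preimage.2 (Set.mk_mem_prod ?_ hg)
        rw [smul_inv_smul]; exact rfl
      exact (closure_minimal h1 hScl).trans h2
    exact IsCompact.of_isClosed_subset hkc (isClosed_tsupport _) hsub
  -- Part 3
  have part3 : ∀ (h : G) (m : M), (∫ g, s (g⁻¹ • h • m) ∂μG) = ∫ g, s (g⁻¹ • m) ∂μG := by
    intro h m
    have hrw : (fun g : G => s (g⁻¹ • h • m)) = fun g : G => (fun x : G => s (x⁻¹ • m)) (h⁻¹ * g) := by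
      funext g
      simp [mul_smul]
    rw [hrw, integral_mul_left_eq_self (fun x : G => s (x⁻¹ • m)) h⁻¹]
  exact ⟨part1, average_smooth_aux μG hsmooth hproper s hs_smooth hs_supp, part3⟩
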